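/- The number of connected components (regions) of the complement of m hyperplanes through the origin in ℝᵈ is at most 2 · Σ_{i=0}^{d−1} C(m−1, i). -/

import Mathlib

open scoped RealInnerProductSpace
open Finset Module


lemma pascal_sum (n D : ℕ) (hD : 0 < D) :
    ∑ i ∈ range D, (n+1).choose i
      = ∑ i ∈ range D, n.choose i + ∑ i ∈ range (D-1), n.choose i := by
  obtain ⟨D, rfl⟩ := Nat.exists_eq_add_of_lt hD
  simp only [zero_add, Nat.add_sub_cancel]
  rw [Finset.sum_range_succ' (fun i => (n+1).choose i),
      Finset.sum_range_succ' (fun i => n.choose i)]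
  simp [Nat.choose_succ_succ, Finset.sum_add_distrib]
  ring

lemma sign_neg_of {r : ℝ} (hr : r ≠ 0) (h : ¬ 0 < r) : r < 0 :=
  (not_lt.mp h).lt_of_ne hr

lemma convex_pos {p q t : ℝ} (hp : 0 < p) (hq : 0 < q) (ht0 : 0 ≤ t) (ht1 : t ≤ 1) :
    0 < p + t * (q - p) := by
  rcases lt_or_ge t 1 with h | h
  · nlinarith [mul_pos (sub_pos.mpr h) hp, mul_nonneg ht0 hq.le]
  · have ht : t = 1 := le_antisymm ht1 h
    subst ht; nlinarith

lemma seg_sign {p q r t : ℝ} (hp : p ≠ 0) (hq : q ≠ 0)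
    (hs : decide (0 < p) = decide (0 < q)) (ht0 : 0 ≤ t) (ht1 : t ≤ 1)
    (hr : r = p + t * (q - p)) : r ≠ 0 ∧ decide (0 < r) = decide (0 < p) := by
  by_cases h : 0 < p
  · simp only [h, decide_true] at hs
    rw [eq_comm, decide_eq_true_eq] at hs
    have h0 : 0 < r := hr ▸ convex_pos h hs ht0 ht1
    exact ⟨ne_of_gt h0, by simp [h0, h]⟩
  · simp only [h, decide_false] at hs
    rw [eq_comm, decide_eq_false_iff_not] at hs
    have hp' : p < 0 := sign_neg_of hp h
    have hq' : q < 0 := sign_neg_of hq hs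
    have h0 : 0 < (-p) + t * ((-q) - (-p)) := convex_pos (by linarith) (by linarith) ht0 ht1
    have h0' : r < 0 := by rw [hr]; linarith
    exact ⟨ne_of_lt h0', by simp [not_lt.mpr h0'.le, not_lt.mpr hp'.le]⟩

lemma cross {E : Type} [NormedAddCommGroup E] [InnerProductSpace ℝ E]
    {v xp xm : E} (hp : 0 < ⟪v, xp⟫) (hm : ⟪v, xm⟫ < 0) :
    ∃ t : ℝ, 0 ≤ t ∧ t ≤ 1 ∧ ⟪v, xm + t • (xp - xm)⟫ = 0 := by
  set g0 := ⟪v, xm⟫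
  set g1 := ⟪v, xp⟫
  have hden : 0 < g1 - g0 := by linarith
  refine ⟨-g0 / (g1 - g0), div_nonneg (by linarith) hden.le, ?_, ?_⟩
  · rw [div_le_one hden]; linarith
  · rw [inner_add_right, real_inner_smul_right, inner_sub_right,
      div_mul_cancel₀ _ (ne_of_gt hden)]
    simp only [g0, g1]; ring

lemma key (n : ℕ) :
    ∀ (E : Type) [NormedAddCommGroup E] [InnerProductSpace ℝ E] [FiniteDimensional ℝ E]
      (a : Fin (n+1) → E),
    Nat.card {σ : Fin (n+1) → Bool //
        ∃ x : E, ∀ i, ⟪a i, x⟫ ≠ 0 ∧ σ i = decide (0 < ⟪a i, x⟫)} ≤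
      2 * ∑ i ∈ range (finrank ℝ E), n.choose i := by
  induction n with
  | zero =>
    intro E _ _ _ a
    rcases Nat.eq_zero_or_pos (finrank ℝ E) with hE | hE
    · have hsub : Subsingleton E := finrank_zero_iff.mp hE
      have : IsEmpty {σ : Fin 1 → Bool //
          ∃ x : E, ∀ i, ⟪a i, x⟫ ≠ 0 ∧ σ i = decide (0 < ⟪a i, x⟫)} := by
        constructor
        rintro ⟨σ, x, hx⟩
        have hx0 : x = 0 := Subsingleton.elim _ _
        exact (hx 0).1 (by simp [hx0])
      rw [Nat.card_of_isEmpty]; exact Nat.zero_le _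
    · have h2 : ∑ i ∈ range (finrank ℝ E), Nat.choose 0 i = 1 := by
        rw [Finset.sum_eq_single 0]
        · simp
        · intro b _ hb
          exact Nat.choose_eq_zero_of_lt (Nat.pos_of_ne_zero hb)
        · intro h; exact absurd (Finset.mem_range.mpr hE) h
      calc Nat.card {σ : Fin 1 → Bool //
            ∃ x : E, ∀ i, ⟪a i, x⟫ ≠ 0 ∧ σ i = decide (0 < ⟪a i, x⟫)}
          ≤ Nat.card (Fin 1 → Bool) :=
            Nat.card_le_card_of_injective _ Subtype.val_injective
        _ ≤ 2 * ∑ i ∈ range (finrank ℝ E), Nat.choose 0 i := by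
            rw [h2]; simp [Nat.card_eq_fintype_card]
  | succ n ih =>
    intro E _ _ _ a
    classical
    set v := a (Fin.last (n+1)) with hv
    by_cases hv0 : v = 0
    · have : IsEmpty {σ : Fin (n+1+1) → Bool //
          ∃ x : E, ∀ i, ⟪a i, x⟫ ≠ 0 ∧ σ i = decide (0 < ⟪a i, x⟫)} := by
        constructor
        rintro ⟨σ, x, hx⟩
        exact (hx (Fin.last (n+1))).1 (by rw [← hv, hv0]; simp)
      simp [Nat.card_of_isEmpty]
    · have hnt : Nontrivial E := nontrivial_of_ne v 0 hv0
      set a' : Fin (n+1) → E := fun i => a i.castSucc with ha'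
      set D := finrank ℝ E with hD
      have hD1 : 0 < D := finrank_pos
      -- the crossing lemma: if both extensions realizable, σ' realizable on the hyperplane
      have hcut : ∀ σ' : Fin (n+1) → Bool,
          (∃ x : E, ∀ i, ⟪a i, x⟫ ≠ 0 ∧ (Fin.snoc σ' true : Fin (n+2) → Bool) i = decide (0 < ⟪a i, x⟫)) →
          (∃ x : E, ∀ i, ⟪a i, x⟫ ≠ 0 ∧ (Fin.snoc σ' false : Fin (n+2) → Bool) i = decide (0 < ⟪a i, x⟫)) →
          ∃ x : E, ⟪v, x⟫ = 0 ∧ ∀ i, ⟪a' i, x⟫ ≠ 0 ∧ σ' i = decide (0 < ⟪a' i, x⟫) := by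
        rintro σ' ⟨xp, hxp⟩ ⟨xm, hxm⟩
        have hp : 0 < ⟪v, xp⟫ := by
          have := hxp (Fin.last (n+1))
          rw [Fin.snoc_last] at this
          exact of_decide_eq_true this.2.symm
        have hm : ⟪v, xm⟫ < 0 := by
          have := hxm (Fin.last (n+1))
          rw [Fin.snoc_last] at this
          exact sign_neg_of this.1 (of_decide_eq_false this.2.symm)
        obtain ⟨t, ht0, ht1, hzero⟩ := cross hp hm
        refine ⟨xm + t • (xp - xm), hzero, fun i => ?_⟩
        have hpi := hxp i.castSucc
        have hmi := hxm i.castSucc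
        rw [Fin.snoc_castSucc] at hpi hmi
        have hr : ⟪a' i, xm + t • (xp - xm)⟫
            = ⟪a' i, xm⟫ + t * (⟪a' i, xp⟫ - ⟪a' i, xm⟫) := by
          rw [inner_add_right, real_inner_smul_right, inner_sub_right]
        obtain ⟨h1, h2⟩ := seg_sign hmi.1 hpi.1 (hmi.2 ▸ hpi.2 ▸ rfl) ht0 ht1 hr
        exact ⟨h1, by rw [h2, ← hmi.2]⟩
      have hsnoc : ∀ σ : Fin (n+1+1) → Bool,
          (Fin.snoc (Fin.init σ) (σ (Fin.last (n+1))) : Fin (n+2) → Bool) = σ :=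
        fun σ => Fin.snoc_init_self σ
      have hlast : ∀ (s : {σ : Fin (n+1+1) → Bool //
            ∃ x : E, ∀ i, ⟪a i, x⟫ ≠ 0 ∧ σ i = decide (0 < ⟪a i, x⟫)}) (b : Bool),
          s.1 (Fin.last (n+1)) = b →
          ∃ x : E, ∀ i, ⟪a i, x⟫ ≠ 0 ∧
            (Fin.snoc (Fin.init s.1) b : Fin (n+2) → Bool) i = decide (0 < ⟪a i, x⟫) := by
        intro s b hb
        rw [← hb, hsnoc]
        exact s.2
      have hini : ∀ (σ : Fin (n+1+1) → Bool),
          (∃ x : E, ∀ i, ⟪a i, x⟫ ≠ 0 ∧ σ i = decide (0 < ⟪a i, x⟫)) →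
          ∃ x : E, ∀ i, ⟪a' i, x⟫ ≠ 0 ∧ Fin.init σ i = decide (0 < ⟪a' i, x⟫) := by
        rintro σ ⟨x, hx⟩
        exact ⟨x, fun i => hx i.castSucc⟩
      have hA : Nat.card {σ : Fin (n+1+1) → Bool //
            ∃ x : E, ∀ i, ⟪a i, x⟫ ≠ 0 ∧ σ i = decide (0 < ⟪a i, x⟫)}
          ≤ Nat.card {σ : Fin (n+1) → Bool //
              ∃ x : E, ∀ i, ⟪a' i, x⟫ ≠ 0 ∧ σ i = decide (0 < ⟪a' i, x⟫)}
            + Nat.card {σ : Fin (n+1) → Bool //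
              ∃ x : E, ⟪v, x⟫ = 0 ∧ ∀ i, ⟪a' i, x⟫ ≠ 0 ∧ σ i = decide (0 < ⟪a' i, x⟫)} := by
        rw [← Nat.card_sum]
        refine Nat.card_le_card_of_injective (fun s =>
          if h : s.1 (Fin.last (n+1)) = false ∧
              (∃ x : E, ∀ i, ⟪a i, x⟫ ≠ 0 ∧
                (Fin.snoc (Fin.init s.1) true : Fin (n+2) → Bool) i = decide (0 < ⟪a i, x⟫))
          then Sum.inr ⟨Fin.init s.1, hcut _ h.2 (hlast s false h.1)⟩
          else Sum.inl ⟨Fin.init s.1, hini _ s.2⟩) ?_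
        intro s1 s2 heq
        simp only at heq
        split_ifs at heq with c1 c2 c2
        all_goals injection heq with heq'
        all_goals have hini_eq : Fin.init s1.1 = Fin.init s2.1 := congrArg Subtype.val heq'
        · refine Subtype.ext ?_
          rw [← hsnoc s1.1, ← hsnoc s2.1, hini_eq, c1.1, c2.1]
        · by_cases hb : s1.1 (Fin.last (n+1)) = s2.1 (Fin.last (n+1))
          · refine Subtype.ext ?_
            rw [← hsnoc s1.1, ← hsnoc s2.1, hini_eq, hb]
          · rcases Bool.eq_false_or_eq_true (s1.1 (Fin.last (n+1))) with hb1 | hb1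
            · have hb2 : s2.1 (Fin.last (n+1)) = false := by
                rcases Bool.eq_false_or_eq_true (s2.1 (Fin.last (n+1))) with h' | h'
                · exact absurd (hb1.trans h'.symm) hb
                · exact h'
              exact absurd ⟨hb2, by rw [← hini_eq]; exact hlast s1 true hb1⟩ c2
            · have hb2 : s2.1 (Fin.last (n+1)) = true := by
                rcases Bool.eq_false_or_eq_true (s2.1 (Fin.last (n+1))) with h' | h'
                · exact h'
                · exact absurd (hb1.trans h'.symm) hb
              exact absurd ⟨hb1, by rw [hini_eq]; exact hlast s2 true hb2⟩ c1
      have hB : Nat.card {σ : Fin (n+1) → Bool //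
            ∃ x : E, ⟪v, x⟫ = 0 ∧ ∀ i, ⟪a' i, x⟫ ≠ 0 ∧ σ i = decide (0 < ⟪a' i, x⟫)}
          ≤ 2 * ∑ i ∈ range (D - 1), n.choose i := by
        set K := (Submodule.span ℝ {v})ᗮ with hK
        have h1 : finrank ℝ (Submodule.span ℝ {v}) = 1 := finrank_span_singleton hv0
        have h2 := Submodule.finrank_add_finrank_orthogonal (K := Submodule.span ℝ {v}) (𝕜 := ℝ)
        have hKrank : finrank ℝ K = D - 1 := by
          clear hcut hsnoc hlast hini hA
          have h3 : finrank ℝ (Submodule.span ℝ {v}) + finrank ℝ K = finrank ℝ E := h2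
          omega
        have hIH := ih K (fun i => (Submodule.orthogonalProjection K (a' i) : K))
        rw [hKrank] at hIH
        have hmap : ∀ (σ : Fin (n+1) → Bool),
            (∃ x : E, ⟪v, x⟫ = 0 ∧ ∀ i, ⟪a' i, x⟫ ≠ 0 ∧ σ i = decide (0 < ⟪a' i, x⟫)) →
            ∃ y : K, ∀ i, ⟪(Submodule.orthogonalProjection K (a' i) : K), y⟫ ≠ 0 ∧
              σ i = decide (0 < ⟪(Submodule.orthogonalProjection K (a' i) : K), y⟫) := by
          rintro σ ⟨x, hx0, hx⟩
          have hxK : x ∈ K := Submodule.mem_orthogonal_singleton_iff_inner_right.mpr hx0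
          refine ⟨⟨x, hxK⟩, fun i => ?_⟩
          have heq : ⟪(Submodule.orthogonalProjection K (a' i) : K), (⟨x, hxK⟩ : K)⟫ = ⟪a' i, x⟫ :=
            Submodule.inner_orthogonalProjection_eq_of_mem_right (K := K) (⟨x, hxK⟩ : K) (a' i)
          rw [heq]
          exact hx i
        refine le_trans (Nat.card_le_card_of_injective
          (fun s => ⟨s.1, hmap s.1 s.2⟩) ?_) hIH
        intro s1 s2 hs
        simp only [Subtype.mk.injEq] at hs
        exact Subtype.ext hs
      refine le_trans hA (le_trans (add_le_add (ih E a') hB) (le_of_eq ?_))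
      rw [pascal_sum n D hD1]
      ring


lemma sign_neg_of' {r : ℝ} (hr : r ≠ 0) (h : ¬ 0 < r) : r < 0 :=
  (not_lt.mp h).lt_of_ne hr

lemma comb_pos {p q α β : ℝ} (hp : 0 < p) (hq : 0 < q) (hα : 0 ≤ α) (hβ : 0 ≤ β)
    (h : α + β = 1) : 0 < α * p + β * q := by
  rcases eq_or_lt_of_le hα with h0 | h0
  · have : β = 1 := by linarith
    subst this; rw [← h0]; ring_nf; linarith
  · nlinarith [mul_nonneg hβ hq.le, mul_pos h0 hp]

/-- The complement of `m` central hyperplanes in `ℝᵈ` has at most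
`2 * ∑_{i=0}^{d-1} C(m-1, i)` connected components (regions). -/
theorem stmt_2 {d m : ℕ} (a : Fin m → EuclideanSpace ℝ (Fin d)) (hm : 0 < m) (ha : ∀ i, a i ≠ 0) :
    Nat.card (ConnectedComponents
      {x : EuclideanSpace ℝ (Fin d) // ∀ i : Fin m, ⟪a i, x⟫ ≠ 0}) ≤
      2 * ∑ i ∈ Finset.range d, (m - 1).choose i := by
  obtain ⟨n, rfl⟩ : ∃ n, m = n + 1 := ⟨m - 1, (Nat.succ_pred_eq_of_pos hm).symm⟩
  simp only [Nat.add_sub_cancel]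
  set X := {x : EuclideanSpace ℝ (Fin d) // ∀ i : Fin (n+1), ⟪a i, x⟫ ≠ 0} with hX
  set sgn : X → (Fin (n+1) → Bool) := fun x i => decide (0 < ⟪a i, x.1⟫) with hsgn
  have hopen : ∀ (i : Fin (n+1)) (b : Bool), IsOpen {x : X | decide (0 < ⟪a i, x.1⟫) = b} := by
    intro i b
    have hci : Continuous fun y : EuclideanSpace ℝ (Fin d) => ⟪a i, y⟫ :=
      continuous_const.inner continuous_id
    cases b
    · have : {x : X | decide (0 < ⟪a i, x.1⟫) = false}
          = Subtype.val ⁻¹' {y : EuclideanSpace ℝ (Fin d) | ⟪a i, y⟫ < 0} := by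
        ext x
        simp only [Set.mem_setOf_eq, Set.mem_preimage, decide_eq_false_iff_not]
        exact ⟨fun h => sign_neg_of' (x.2 i) h, fun h => not_lt.mpr (le_of_lt h)⟩
      rw [this]
      exact (isOpen_lt hci continuous_const).preimage continuous_subtype_val
    · have : {x : X | decide (0 < ⟪a i, x.1⟫) = true}
          = Subtype.val ⁻¹' {y : EuclideanSpace ℝ (Fin d) | 0 < ⟪a i, y⟫} := by
        ext x
        simp only [Set.mem_setOf_eq, Set.mem_preimage, decide_eq_true_eq]
      rw [this]
      exact (isOpen_lt continuous_const hci).preimage continuous_subtype_val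
  have hcont : Continuous sgn :=
    continuous_pi fun i => continuous_discrete_rng.mpr fun b => hopen i b
  set lift := hcont.connectedComponentsLift with hlift
  have hlift_coe : ∀ x : X, lift (x : ConnectedComponents X) = sgn x :=
    fun x => hcont.connectedComponentsLift_apply_coe x
  have hinj : Function.Injective lift := by
    intro c1 c2 hc
    obtain ⟨x1, rfl⟩ := ConnectedComponents.surjective_coe c1
    obtain ⟨x2, rfl⟩ := ConnectedComponents.surjective_coe c2
    rw [hlift_coe, hlift_coe] at hc
    set A : Set (EuclideanSpace ℝ (Fin d)) :=
      {y | ∀ i, if sgn x1 i = true then 0 < ⟪a i, y⟫ else ⟪a i, y⟫ < 0} with hA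
    have hconv : Convex ℝ A := by
      intro y1 hy1 y2 hy2 α β hα hβ hαβ
      intro i
      have h1 := hy1 i
      have h2 := hy2 i
      have hin : ⟪a i, α • y1 + β • y2⟫ = α * ⟪a i, y1⟫ + β * ⟪a i, y2⟫ := by
        rw [inner_add_right, real_inner_smul_right, real_inner_smul_right]
      by_cases hb : sgn x1 i = true
      · rw [if_pos hb] at h1 h2 ⊢
        rw [hin]; exact comb_pos h1 h2 hα hβ hαβ
      · rw [if_neg hb] at h1 h2 ⊢
        rw [hin]
        have := comb_pos (neg_pos.mpr h1) (neg_pos.mpr h2) hα hβ hαβ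
        nlinarith
    have hmemA : ∀ (x : X), sgn x1 = sgn x → x.1 ∈ A := by
      intro x hx i
      by_cases hb : sgn x1 i = true
      · rw [if_pos hb]
        have : sgn x i = true := by rw [← hx]; exact hb
        exact of_decide_eq_true this
      · rw [if_neg hb]
        have : sgn x i = false := by rw [← hx]; exact Bool.eq_false_iff.mpr hb
        exact sign_neg_of' (x.2 i) (of_decide_eq_false this)
    have hx1A : x1.1 ∈ A := hmemA x1 rfl
    have hx2A : x2.1 ∈ A := hmemA x2 hc
    have hAsub : A ⊆ Set.range (Subtype.val : X → EuclideanSpace ℝ (Fin d)) := by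
      intro y hy
      refine ⟨⟨y, fun i => ?_⟩, rfl⟩
      have := hy i
      by_cases hb : sgn x1 i = true
      · rw [if_pos hb] at this; exact ne_of_gt this
      · rw [if_neg hb] at this; exact ne_of_lt this
    have hpre : IsPreconnected (Subtype.val ⁻¹' A : Set X) := by
      have himg : Subtype.val '' (Subtype.val ⁻¹' A : Set X) = A := by
        rw [Set.image_preimage_eq_inter_range, Set.inter_eq_self_of_subset_left hAsub]
      have hp := hconv.isPreconnected
      rw [← himg] at hp
      exact Topology.IsInducing.subtypeVal.isPreconnected_image.mp hp
    rw [ConnectedComponents.coe_eq_coe]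
    have hsub := hpre.subset_connectedComponent (show x1 ∈ _ from hx1A)
    exact connectedComponent_eq (hsub (show x2 ∈ _ from hx2A))
  -- now inject into realizable sign vectors
  have hprop : ∀ c : ConnectedComponents X,
      ∃ x : EuclideanSpace ℝ (Fin d), ∀ i, ⟪a i, x⟫ ≠ 0 ∧ lift c i = decide (0 < ⟪a i, x⟫) := by
    intro c
    obtain ⟨x, rfl⟩ := ConnectedComponents.surjective_coe c
    rw [hlift_coe]
    exact ⟨x.1, fun i => ⟨x.2 i, rfl⟩⟩
  have hcard : Nat.card (ConnectedComponents X) ≤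
      Nat.card {σ : Fin (n+1) → Bool //
        ∃ x : EuclideanSpace ℝ (Fin d), ∀ i, ⟪a i, x⟫ ≠ 0 ∧ σ i = decide (0 < ⟪a i, x⟫)} := by
    refine Nat.card_le_card_of_injective (fun c => ⟨lift c, hprop c⟩) ?_
    intro c1 c2 hc
    simp only [Subtype.mk.injEq] at hc
    exact hinj hc
  calc Nat.card (ConnectedComponents X)
      ≤ Nat.card {σ : Fin (n+1) → Bool //
        ∃ x : EuclideanSpace ℝ (Fin d), ∀ i, ⟪a i, x⟫ ≠ 0 ∧ σ i = decide (0 < ⟪a i, x⟫)} :=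
        hcard
    _ ≤ 2 * ∑ i ∈ range (finrank ℝ (EuclideanSpace ℝ (Fin d))), n.choose i :=
        key n (EuclideanSpace ℝ (Fin d)) a
    _ = 2 * ∑ i ∈ range d, n.choose i := by rw [finrank_euclideanSpace_fin]
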